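/- Suppose α_x = α_L = 1 and the regularity assumption holds (p̄_i > 0 and Σ_{j=1}^n π_{ij} < 1 for every i ≤ n). Then for every endowment vector x ∈ ℝⁿ₊ the clearing map Ψ_x has a unique fixed point in ℝⁿ. -/

import Mathlib

open Matrix BigOperators

noncomputable section

/-- Total liabilities `p̄_i = Σ_{j=1}^{n+1} L_{ij}`. -/
def pbar {n : ℕ} (L : Matrix (Fin n) (Fin (n + 1)) ℝ) (i : Fin n) : ℝ :=
  ∑ j, L i j

/-- Relative liabilities `π_{ij} = L_{ij} / p̄_i` if `p̄_i > 0`, else `0`. -/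
def relLiab {n : ℕ} (L : Matrix (Fin n) (Fin (n + 1)) ℝ) (i j : Fin n) : ℝ :=
  if 0 < pbar L i then L i j.castSucc / pbar L i else 0

/-- The clearing map in wealths `Ψ_x`. -/
def Psi {n : ℕ} (L : Matrix (Fin n) (Fin (n + 1)) ℝ) (αx αL : ℝ)
    (x V : Fin n → ℝ) (i : Fin n) : ℝ :=
  if 0 ≤ V i then
    x i + ∑ j, relLiab L j i * max (pbar L j - max (-(V j)) 0) 0 - pbar L i
  else
    αx * x i + αL * ∑ j, relLiab L j i * max (pbar L j - max (-(V j)) 0) 0 - pbar L i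

/-- If `α_x = α_L = 1` and the regularity assumption holds (`p̄_i > 0` and
`Σ_{j=1}^n π_{ij} < 1` for every bank `i`), then for every endowment vector `x ∈ ℝⁿ₊`
the clearing map `Ψ_x` has a unique fixed point in `ℝⁿ`. -/
theorem clearing_unique (n : ℕ) (hn : 1 ≤ n)
    (L : Matrix (Fin n) (Fin (n + 1)) ℝ)
    (hL : ∀ i j, 0 ≤ L i j) (hLdiag : ∀ i : Fin n, L i i.castSucc = 0)
    (αx αL : ℝ) (hαx : αx = 1) (hαL : αL = 1)
    (hreg : ∀ i, 0 < pbar L i ∧ ∑ j, relLiab L i j < 1)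
    (x : Fin n → ℝ) (hx : ∀ i, 0 ≤ x i) :
    ∃! V : Fin n → ℝ, Psi L αx αL x V = V := by
  subst hαx hαL
  have hΨ : ∀ (V : Fin n → ℝ) i, Psi L 1 1 x V i =
      x i + ∑ j, relLiab L j i * max (pbar L j - max (-(V j)) 0) 0 - pbar L i := by
    intro V i; unfold Psi; split_ifs <;> ring
  have hπ : ∀ i j, 0 ≤ relLiab L i j := by
    intro i j; unfold relLiab; split_ifs with h
    · exact div_nonneg (hL _ _) h.le
    · exact le_refl 0
  haveI : Nonempty (Fin n) := ⟨⟨0, hn⟩⟩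
  set c : ℝ := Finset.univ.sup' Finset.univ_nonempty (fun i => ∑ j, relLiab L i j) with hc
  have hc0 : 0 ≤ c := by
    rw [hc]
    refine le_trans ?_
      (Finset.le_sup' (fun i => ∑ j, relLiab L i j) (Finset.mem_univ (⟨0, hn⟩ : Fin n)))
    exact Finset.sum_nonneg fun j _ => hπ _ j
  have hc1 : c < 1 := by
    rw [hc, Finset.sup'_lt_iff]; intro i _; exact (hreg i).2
  have hrow : ∀ j : Fin n, ∑ i, relLiab L j i ≤ c := by
    intro j; rw [hc]
    exact Finset.le_sup' (fun i => ∑ j, relLiab L i j) (Finset.mem_univ j)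
  have hg : ∀ (a v w : ℝ), |max (a - max (-v) 0) 0 - max (a - max (-w) 0) 0| ≤ |v - w| := by
    intro a v w
    calc |max (a - max (-v) 0) 0 - max (a - max (-w) 0) 0|
        ≤ |(a - max (-v) 0) - (a - max (-w) 0)| := abs_max_sub_max_le_abs _ _ _
      _ = |max (-v) 0 - max (-w) 0| := by rw [← abs_neg]; ring_nf
      _ ≤ |(-v) - (-w)| := abs_max_sub_max_le_abs _ _ _
      _ = |v - w| := by rw [← abs_neg]; ring_nf
  let E := PiLp 1 (fun _ : Fin n => ℝ)
  let F : E → E := fun V => WithLp.toLp 1 (fun i => Psi L 1 1 x V i)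
  have hdist : ∀ V W : E, dist V W = ∑ i, |V i - W i| := by
    intro V W
    rw [PiLp.dist_eq_sum (by norm_num)]
    simp [Real.dist_eq]
  have hlip : LipschitzWith ⟨c, hc0⟩ F := by
    apply LipschitzWith.of_dist_le_mul
    intro V W
    rw [hdist, hdist]
    push_cast
    calc ∑ i, |F V i - F W i|
        ≤ ∑ i, ∑ j, relLiab L j i * |V j - W j| := by
          apply Finset.sum_le_sum
          intro i _
          have : F V i - F W i = ∑ j, relLiab L j i *
              (max (pbar L j - max (-(V j)) 0) 0 - max (pbar L j - max (-(W j)) 0) 0) := by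
            show Psi L 1 1 x V i - Psi L 1 1 x W i = _
            rw [hΨ, hΨ]
            simp only [mul_sub, Finset.sum_sub_distrib]
            ring
          rw [this]
          refine le_trans (Finset.abs_sum_le_sum_abs _ _) (Finset.sum_le_sum fun j _ => ?_)
          rw [abs_mul, abs_of_nonneg (hπ _ _)]
          exact mul_le_mul_of_nonneg_left (hg _ _ _) (hπ _ _)
      _ = ∑ j, (∑ i, relLiab L j i) * |V j - W j| := by
          rw [Finset.sum_comm]
          exact Finset.sum_congr rfl fun j _ => by rw [Finset.sum_mul]
      _ ≤ ∑ j, c * |V j - W j| := by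
          refine Finset.sum_le_sum fun j _ => mul_le_mul_of_nonneg_right (hrow j) (abs_nonneg _)
      _ = c * ∑ j, |V j - W j| := by rw [Finset.mul_sum]
  have hC : ContractingWith ⟨c, hc0⟩ F := ⟨by exact_mod_cast hc1, hlip⟩
  refine ⟨(ContractingWith.fixedPoint F hC : E), ?_, ?_⟩
  · exact congrArg WithLp.ofLp hC.fixedPoint_isFixedPt
  · intro V hV
    exact congrArg WithLp.ofLp (hC.fixedPoint_unique (show Function.IsFixedPt F (WithLp.toLp 1 V) from congrArg (WithLp.toLp 1) hV))
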